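/- For any arrival rate vector λ in the capacity region Λ and any scheduling policy (possibly using full knowledge of arrival statistics, past and future arrivals, and past configurations) that renders the queueing system stable, the long-run average cost lim inf_{T→∞} (1/T) Σ_{t=1}^{T} E[ Σ_{l=1}^{L} ( V·C₁(N^l(t)) + U·C₂(N^l(t−1), N^l(t)) ) ] is at least C_opt(λ). -/

import Mathlib

open MeasureTheory ProbabilityTheory Filter
open Topology

/-- A job service configuration: `N m s` is the number of VMs offered to jobs that
require a type-`m` VM for `s+1` more slots (sizes `1,…,S` are indexed by `Fin S`). -/
abbrev Config (M S : ℕ) := Fin M → Fin S → ℕ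

/-- `nxt f i = f (i+1)`, with the convention that entries beyond the maximal size are `0`. -/
def nxt {S : ℕ} (f : Fin S → ℕ) (i : Fin S) : ℕ :=
  if h : (i : ℕ) + 1 < S then f ⟨(i : ℕ) + 1, h⟩ else 0

/-- Affine server running cost `C₁(N) = c₀·1{N ≠ 0} + Σ_m c_m Σ_s N_{m,s}`. -/
noncomputable def C1 {M S : ℕ} (c0 : ℝ) (c : Fin M → ℝ) (N : Config M S) : ℝ :=
  (if N = 0 then 0 else c0) + ∑ m, c m * ∑ s, (N m s : ℝ)

/-- Job migration cost `C₂(n, N) = Σ_m Σ_{s=2}^{S} (n_{m,s} − N_{m,s−1})⁺`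
(truncated natural subtraction realizes the positive part). -/
def C2 {M S : ℕ} (n N : Config M S) : ℕ :=
  ∑ m, ∑ i : Fin S, (nxt (n m) i - N m i)

/-- The capacity region `Λ`: `λ ∈ Λ` iff `λ ≥ 0` and the per-type workload rates
`Σ_s s·λ_{m,s}` are a convex combination (per server) of feasible configurations. -/
def inCap {L M S : ℕ} (𝒩 : Fin L → Finset (Config M S))
    (lam : Fin M → Fin S → ℝ) : Prop :=
  (∀ m s, 0 ≤ lam m s) ∧
  ∃ β : Fin L → Config M S → ℝ,
    (∀ l N, 0 ≤ β l N) ∧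
    (∀ l, ∑ N ∈ 𝒩 l, β l N = 1) ∧
    ∀ m, ∑ s : Fin S, ((s : ℕ) + 1 : ℝ) * lam m s
        = ∑ l, ∑ N ∈ 𝒩 l, β l N * ∑ s, (N m s : ℝ)

/-- Achievable values of the server-running-cost-only (static policies) problem. -/
def CbarOptSet {L M S : ℕ} (𝒩 : Fin L → Finset (Config M S))
    (c0 : ℝ) (c : Fin M → ℝ) (lam : Fin M → Fin S → ℝ) : Set ℝ :=
  {x | ∃ (lamL : Fin L → Fin M → Fin S → ℝ) (π : Fin L → Config M S → ℝ),
      (∀ l m s, 0 ≤ lamL l m s) ∧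
      (∀ m s, ∑ l, lamL l m s = lam m s) ∧
      (∀ l N, 0 ≤ π l N) ∧
      (∀ l N, N ∉ 𝒩 l → π l N = 0) ∧
      (∀ l, ∑ N ∈ 𝒩 l, π l N = 1) ∧
      (∀ l m, ∑ s : Fin S, ((s : ℕ) + 1 : ℝ) * lamL l m s
          ≤ ∑ N ∈ 𝒩 l, π l N * ∑ s, (N m s : ℝ)) ∧
      x = ∑ l, ∑ N ∈ 𝒩 l, π l N * C1 c0 c N}

/-- `C̄_opt(λ)`: the optimal average server running cost subject to stability. -/
noncomputable def CbarOpt {L M S : ℕ} (𝒩 : Fin L → Finset (Config M S))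
    (c0 : ℝ) (c : Fin M → ℝ) (lam : Fin M → Fin S → ℝ) : ℝ :=
  sInf (CbarOptSet 𝒩 c0 c lam)

/-- Achievable values of the joint server-running plus migration cost problem over
stationary Markov (configuration-valued) policies. -/
def CoptSet {L M S : ℕ} (𝒩 : Fin L → Finset (Config M S))
    (c0 : ℝ) (c : Fin M → ℝ) (V U : ℝ) (lam : Fin M → Fin S → ℝ) : Set ℝ :=
  {x | ∃ (lamL : Fin L → Fin M → Fin S → ℝ) (π : Fin L → Config M S → ℝ)
        (P : Fin L → Config M S → Config M S → ℝ),
      (∀ l m s, 0 ≤ lamL l m s) ∧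
      (∀ m s, ∑ l, lamL l m s = lam m s) ∧
      (∀ l N, 0 ≤ π l N) ∧
      (∀ l N, N ∉ 𝒩 l → π l N = 0) ∧
      (∀ l, ∑ N ∈ 𝒩 l, π l N = 1) ∧
      (∀ l N N', 0 ≤ P l N N') ∧
      (∀ l, ∀ N ∈ 𝒩 l, ∑ N' ∈ 𝒩 l, P l N N' = 1) ∧
      (∀ l, ∀ N ∈ 𝒩 l, ∑ N' ∈ 𝒩 l, π l N' * P l N' N = π l N) ∧
      (∀ l m, ∑ s : Fin S, ((s : ℕ) + 1 : ℝ) * lamL l m s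
          ≤ ∑ N ∈ 𝒩 l, π l N * ∑ s, (N m s : ℝ)) ∧
      x = ∑ l, (V * ∑ N ∈ 𝒩 l, π l N * C1 c0 c N
            + U * ∑ N ∈ 𝒩 l, π l N * ∑ N' ∈ 𝒩 l, P l N N' * (C2 N N' : ℝ))}

/-- `C_opt(λ)`: the optimal weighted average server running plus migration cost. -/
noncomputable def Copt {L M S : ℕ} (𝒩 : Fin L → Finset (Config M S))
    (c0 : ℝ) (c : Fin M → ℝ) (V U : ℝ) (lam : Fin M → Fin S → ℝ) : ℝ :=
  sInf (CoptSet 𝒩 c0 c V U lam)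

section AuxLemmas
variable {Ω : Type} [MeasurableSpace Ω] {μ : Measure Ω} [IsProbabilityMeasure μ]

lemma aux_integrable_of_bounded {f : Ω → ℝ} (hf : Measurable f) (C : ℝ)
    (hC : ∀ ω, |f ω| ≤ C) : Integrable f μ :=
  ⟨hf.aestronglyMeasurable, HasFiniteIntegral.of_bounded (C := C)
    (Filter.Eventually.of_forall fun ω => by simpa [Real.norm_eq_abs] using hC ω)⟩

lemma aux_sum_pick {γ : Type*} [DecidableEq γ] (F : Finset γ) {x : γ} (hx : x ∈ F)
    (f : γ → ℝ) : ∑ N ∈ F, (if x = N then (1:ℝ) else 0) * f N = f x := by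
  have h : ∀ N ∈ F, (if x = N then (1:ℝ) else 0) * f N = if x = N then f N else 0 := by
    intro N _; split <;> simp
  rw [Finset.sum_congr rfl h, Finset.sum_ite_eq, if_pos hx]

lemma aux_meas_ind {γ : Type*} [MeasurableSpace γ] [MeasurableSingletonClass γ] [DecidableEq γ]
    {X : Ω → γ} (hX : Measurable X) (N : γ) :
    Measurable (fun ω => (if X ω = N then (1:ℝ) else 0)) :=
  Measurable.ite (hX (measurableSet_singleton N)) measurable_const measurable_const

lemma aux_integrable_ind {γ : Type*} [MeasurableSpace γ] [MeasurableSingletonClass γ] [DecidableEq γ]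
    {X : Ω → γ} (hX : Measurable X) (N : γ) :
    Integrable (fun ω => (if X ω = N then (1:ℝ) else 0)) μ :=
  aux_integrable_of_bounded (aux_meas_ind hX N) 1 (fun ω => by split <;> norm_num)

lemma aux_integrable_comp {γ : Type*} [MeasurableSpace γ] [MeasurableSingletonClass γ] [DecidableEq γ]
    {X : Ω → γ} (hX : Measurable X) {F : Finset γ} (hmem : ∀ ω, X ω ∈ F) (f : γ → ℝ) :
    Integrable (fun ω => f (X ω)) μ := by
  have h : (fun ω => f (X ω)) = fun ω => ∑ N ∈ F, (if X ω = N then (1:ℝ) else 0) * f N :=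
    funext fun ω => (aux_sum_pick F (hmem ω) f).symm
  rw [h]
  exact integrable_finset_sum F fun N _ => (aux_integrable_ind hX N).mul_const (f N)

lemma aux_integral_comp {γ : Type*} [MeasurableSpace γ] [MeasurableSingletonClass γ] [DecidableEq γ]
    {X : Ω → γ} (hX : Measurable X) {F : Finset γ} (hmem : ∀ ω, X ω ∈ F) (f : γ → ℝ) :
    ∫ ω, f (X ω) ∂μ = ∑ N ∈ F, (∫ ω, (if X ω = N then (1:ℝ) else 0) ∂μ) * f N := by
  calc ∫ ω, f (X ω) ∂μ = ∫ ω, ∑ N ∈ F, (if X ω = N then (1:ℝ) else 0) * f N ∂μ :=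
        integral_congr_ae (Filter.Eventually.of_forall fun ω => (aux_sum_pick F (hmem ω) f).symm)
    _ = ∑ N ∈ F, ∫ ω, (if X ω = N then (1:ℝ) else 0) * f N ∂μ :=
        integral_finset_sum F fun N _ => (aux_integrable_ind hX N).mul_const (f N)
    _ = ∑ N ∈ F, (∫ ω, (if X ω = N then (1:ℝ) else 0) ∂μ) * f N :=
        Finset.sum_congr rfl fun N _ => integral_mul_const (f N) _

lemma aux_sum_nxt {S : ℕ} (h : Fin S → ℕ) (h0 : ∀ hS : 0 < S, h ⟨0, hS⟩ = 0) :
    ∑ i : Fin S, nxt h i = ∑ i : Fin S, h i := by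
  set H : ℕ → ℕ := fun j => if hj : j < S then h ⟨j, hj⟩ else 0 with hH
  have e1 : ∀ i : Fin S, nxt h i = H ((i:ℕ)+1) := fun i => rfl
  have e2 : ∀ i : Fin S, h i = H (i:ℕ) := fun i => by simp [hH, i.isLt]
  have hH0 : H 0 = 0 := by
    by_cases hS : 0 < S
    · simp [hH, hS, h0 hS]
    · simp [hH, Nat.not_lt.mp (by omega : ¬ (0:ℕ) < S)]
  have hHS : H S = 0 := by simp [hH]
  have k1 := Finset.sum_range_succ' H S
  have k2 := Finset.sum_range_succ H S
  calc ∑ i : Fin S, nxt h i = ∑ j ∈ Finset.range S, H (j+1) := by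
        simp_rw [e1]; exact Fin.sum_univ_eq_sum_range (fun j => H (j+1)) S
    _ = ∑ j ∈ Finset.range S, H j := by omega
    _ = ∑ i : Fin S, h i := by
        simp_rw [e2]; exact (Fin.sum_univ_eq_sum_range (fun j => H j) S).symm

lemma aux_nxt_sum {S : ℕ} {ι : Type*} (s : Finset ι) (f : ι → Fin S → ℕ) (i : Fin S) :
    ∑ l ∈ s, nxt (f l) i = nxt (fun j => ∑ l ∈ s, f l j) i := by
  by_cases h : (i:ℕ)+1 < S <;> simp [nxt, h]

lemma aux_step {S : ℕ} (q d a q' : Fin S → ℕ)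
    (hrec : ∀ i, q' i = (q i - d i) + a i + min (nxt d i) (nxt q i)) :
    (∑ i : Fin S, ((i:ℕ)+1) * q' i) + ∑ i : Fin S, min (q i) (d i)
      = (∑ i : Fin S, ((i:ℕ)+1) * q i) + ∑ i : Fin S, ((i:ℕ)+1) * a i := by
  have key : ∀ i : Fin S, ((i:ℕ)+1) * min (nxt d i) (nxt q i)
      = nxt (fun j => (j:ℕ) * min (d j) (q j)) i := by
    intro i; by_cases h : (i:ℕ)+1 < S <;> simp [nxt, h]
  have hsum : ∑ i : Fin S, ((i:ℕ)+1) * min (nxt d i) (nxt q i)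
      = ∑ i : Fin S, (i:ℕ) * min (d i) (q i) := by
    simp_rw [key]; exact aux_sum_nxt _ (fun hS => by simp)
  have expand : ∀ i : Fin S, ((i:ℕ)+1) * q' i
      = ((i:ℕ)+1) * (q i - d i) + ((i:ℕ)+1) * a i + ((i:ℕ)+1) * min (nxt d i) (nxt q i) := by
    intro i; rw [hrec i]; ring
  calc (∑ i : Fin S, ((i:ℕ)+1) * q' i) + ∑ i : Fin S, min (q i) (d i)
      = ((∑ i : Fin S, ((i:ℕ)+1) * (q i - d i)) + (∑ i : Fin S, ((i:ℕ)+1) * a i)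
          + ∑ i : Fin S, ((i:ℕ)+1) * min (nxt d i) (nxt q i)) + ∑ i : Fin S, min (q i) (d i) := by
        simp_rw [expand, Finset.sum_add_distrib]
    _ = (∑ i : Fin S, (((i:ℕ)+1) * (q i - d i) + (i:ℕ) * min (d i) (q i) + min (q i) (d i)))
          + ∑ i : Fin S, ((i:ℕ)+1) * a i := by
        rw [hsum]; simp_rw [Finset.sum_add_distrib]; ring
    _ = (∑ i : Fin S, ((i:ℕ)+1) * q i) + ∑ i : Fin S, ((i:ℕ)+1) * a i := by
        congr 1
        refine Finset.sum_congr rfl fun i _ => ?_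
        rw [Nat.min_comm (d i) (q i)]
        have h1 : (q i - d i) + min (q i) (d i) = q i := by omega
        calc ((i:ℕ)+1) * (q i - d i) + (i:ℕ) * min (q i) (d i) + min (q i) (d i)
            = ((i:ℕ)+1) * ((q i - d i) + min (q i) (d i)) := by ring
          _ = ((i:ℕ)+1) * q i := by rw [h1]

lemma aux_avg_swap {ι κ : Type*} (s : Finset ι) (u : Finset κ) (a v : ℝ) (f : ι → κ → ℝ)
    (g : κ → ℝ) :
    a * ∑ t ∈ s, (v * ∑ N ∈ u, f t N * g N) = v * ∑ N ∈ u, (a * ∑ t ∈ s, f t N) * g N := by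
  have L : ∀ t, a * (v * ∑ N ∈ u, f t N * g N) = ∑ N ∈ u, a * v * (f t N * g N) := by
    intro t
    rw [Finset.mul_sum, Finset.mul_sum]
    exact Finset.sum_congr rfl fun N _ => by ring
  have R : ∀ N, v * ((a * ∑ t ∈ s, f t N) * g N) = ∑ t ∈ s, a * v * (f t N * g N) := by
    intro N
    rw [show v * ((a * ∑ t ∈ s, f t N) * g N) = (a * v * g N) * ∑ t ∈ s, f t N by ring,
      Finset.mul_sum]
    exact Finset.sum_congr rfl fun t _ => by ring
  calc a * ∑ t ∈ s, (v * ∑ N ∈ u, f t N * g N)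
      = ∑ t ∈ s, a * (v * ∑ N ∈ u, f t N * g N) := Finset.mul_sum _ _ _
    _ = ∑ t ∈ s, ∑ N ∈ u, a * v * (f t N * g N) := Finset.sum_congr rfl fun t _ => L t
    _ = ∑ N ∈ u, ∑ t ∈ s, a * v * (f t N * g N) := Finset.sum_comm
    _ = ∑ N ∈ u, v * ((a * ∑ t ∈ s, f t N) * g N) := Finset.sum_congr rfl fun N _ => (R N).symm
    _ = v * ∑ N ∈ u, (a * ∑ t ∈ s, f t N) * g N := (Finset.mul_sum _ _ _).symm

lemma aux_avg_swap' {ι κ : Type*} (s : Finset ι) (u : Finset κ) (a : ℝ) (f : ι → κ → ℝ)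
    (g : κ → ℝ) :
    a * ∑ t ∈ s, (∑ N ∈ u, f t N * g N) = ∑ N ∈ u, (a * ∑ t ∈ s, f t N) * g N := by
  have := aux_avg_swap s u a 1 f g
  simpa using this

end AuxLemmas

set_option maxHeartbeats 4000000 in
/-- Lemma 1 of the paper: for any arrival rate vector `λ` in the capacity region and any
scheduling policy (arbitrary configuration-valued stochastic process `Npol`) rendering the
queueing system stable, the long-run average cost
`liminf_T (1/T) Σ_{t=1}^T E[Σ_l (V·C₁(N^l(t)) + U·C₂(N^l(t−1), N^l(t)))]`
is at least `C_opt(λ)`. -/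
theorem average_cost_lower_bound
    (L M S Amax Nmax : ℕ) (hL : 1 ≤ L) (hM : 1 ≤ M) (hS : 1 ≤ S)
    -- Feasible configuration sets: finite, containing the zero configuration,
    -- with at most `Nmax` VMs in any configuration.
    (𝒩 : Fin L → Finset (Config M S))
    (h0mem : ∀ l, (0 : Config M S) ∈ 𝒩 l)
    (hNmax : ∀ l, ∀ N ∈ 𝒩 l, ∑ m, ∑ s, N m s ≤ Nmax)
    -- Cost coefficients.
    (c0 : ℝ) (c : Fin M → ℝ) (hc0 : 0 ≤ c0) (hc : ∀ m, 0 ≤ c m)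
    (V U : ℝ) (hV : 0 ≤ V) (hU : 0 ≤ U)
    -- Arrival rates in the capacity region.
    (lam : Fin M → Fin S → ℝ) (hlam : inCap 𝒩 lam)
    {Ω : Type} [MeasurableSpace Ω] (μ : Measure Ω) [IsProbabilityMeasure μ]
    -- Arrival process: i.i.d. across slots, bounded, with the given rates,
    -- and a positive probability of no arrivals.
    (A : ℕ → Ω → Fin M → Fin S → ℕ)
    (hAmeas : ∀ t, Measurable (A t))
    (hAident : ∀ t, IdentDistrib (A t) (A 0) μ μ)
    (hAindep : iIndepFun A μ)
    (hAbdd : ∀ t ω m s, A t ω m s ≤ Amax)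
    (hAmean : ∀ t m s, (∫ ω, (A t ω m s : ℝ) ∂μ) = lam m s)
    (hAzero : ∀ t, 0 < μ {ω | A t ω = 0})
    -- An arbitrary scheduling policy and the induced queue process.
    (Npol : ℕ → Fin L → Ω → Config M S)
    (hNmeas : ∀ t l, Measurable (Npol t l))
    (hNmem : ∀ t l ω, Npol t l ω ∈ 𝒩 l)
    (Q : ℕ → Ω → Fin M → Fin S → ℕ)
    (hQmeas : ∀ t, Measurable (Q t))
    (q0 : Fin M → Fin S → ℕ) (hQ0 : ∀ ω, Q 0 ω = q0)
    -- Queue length evolution.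
    (hQrec : ∀ t ω m i, Q (t + 1) ω m i
        = (Q t ω m i - ∑ l, Npol t l ω m i) + A t ω m i
          + min (∑ l, nxt (Npol t l ω m) i) (nxt (Q t ω m) i))
    -- Stability: `limsup_t Σ_{m,s} E[Q_{m,s}(t)] < ∞`.
    (hstable : ∃ C : ℝ, ∀ᶠ t in Filter.atTop,
        (∑ m, ∑ s, ∫ ω, (Q t ω m s : ℝ) ∂μ) ≤ C) :
    (Copt 𝒩 c0 c V U lam : EReal)
      ≤ Filter.liminf (fun T : ℕ =>
          (((T : ℝ)⁻¹ * ∑ t ∈ Finset.Icc 1 T, ∫ ω,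
              (∑ l, (V * C1 c0 c (Npol t l ω)
                + U * (C2 (Npol (t - 1) l ω) (Npol t l ω) : ℝ))) ∂μ) : EReal))
          Filter.atTop := by
  classical
  by_contra hcon
  rw [not_le] at hcon
  -- nonnegativity of costs
  have hC1nn : ∀ N : Config M S, 0 ≤ C1 c0 c N := by
    intro N
    refine add_nonneg ?_ (Finset.sum_nonneg fun m _ =>
      mul_nonneg (hc m) (Finset.sum_nonneg fun s _ => Nat.cast_nonneg _))
    split
    · exact le_rfl
    · exact hc0
  have hInn : ∀ (t : ℕ) (ω : Ω),
      0 ≤ ∑ l, (V * C1 c0 c (Npol t l ω) + U * (C2 (Npol (t - 1) l ω) (Npol t l ω) : ℝ)) :=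
    fun t ω => Finset.sum_nonneg fun l _ =>
      add_nonneg (mul_nonneg hV (hC1nn _)) (mul_nonneg hU (Nat.cast_nonneg _))
  set F' : ℕ → ℝ := fun T => (T : ℝ)⁻¹ * ∑ t ∈ Finset.Icc 1 T, ∫ ω,
      (∑ l, (V * C1 c0 c (Npol t l ω) + U * (C2 (Npol (t - 1) l ω) (Npol t l ω) : ℝ))) ∂μ
    with hF'def
  have hF'nn : ∀ T, 0 ≤ F' T := fun T =>
    mul_nonneg (by positivity) (Finset.sum_nonneg fun t _ => integral_nonneg (hInn t))
  have h0le : (0 : EReal) ≤ Filter.liminf (fun T : ℕ =>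
      (((T : ℝ)⁻¹ * ∑ t ∈ Finset.Icc 1 T, ∫ ω,
          (∑ l, (V * C1 c0 c (Npol t l ω)
            + U * (C2 (Npol (t - 1) l ω) (Npol t l ω) : ℝ))) ∂μ : ℝ) : EReal)) Filter.atTop := by
    refine Filter.le_liminf_of_le (by isBoundedDefault)
      (Filter.Eventually.of_forall fun T => ?_)
    exact EReal.coe_nonneg.mpr (hF'nn T)
  obtain ⟨b', hb1, hb2⟩ := exists_between hcon
  have hb'top : b' ≠ ⊤ := (hb2.trans (EReal.coe_lt_top _)).ne
  have hb'bot : b' ≠ ⊥ := ((EReal.bot_lt_coe 0).trans_le (le_trans h0le hb1.le)).ne'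
  set b : ℝ := b'.toReal with hbdef
  have hbe : (b : EReal) = b' := EReal.coe_toReal hb'top hb'bot
  have hbC : b < Copt 𝒩 c0 c V U lam := by
    rw [← hbe] at hb2; exact EReal.coe_lt_coe_iff.mp hb2
  have hfreq : ∃ᶠ T in Filter.atTop, F' T < b := by
    rw [← hbe] at hb1
    have h := Filter.frequently_lt_of_liminf_lt (by isBoundedDefault) hb1
    exact h.mono fun T hT => EReal.coe_lt_coe_iff.mp hT
  obtain ⟨ψ, hψmono, hψlt⟩ := Filter.extraction_of_frequently_atTop hfreq
  -- entry bounds for configurations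
  have hentry : ∀ (t : ℕ) (l : Fin L) (ω : Ω) (m : Fin M) (i : Fin S),
      Npol t l ω m i ≤ Nmax := by
    intro t l ω m i
    calc Npol t l ω m i ≤ ∑ s, Npol t l ω m s :=
          Finset.single_le_sum (fun s _ => Nat.zero_le _) (Finset.mem_univ i)
      _ ≤ ∑ m', ∑ s, Npol t l ω m' s :=
          Finset.single_le_sum (f := fun m' => ∑ s, Npol t l ω m' s)
            (fun _ _ => Nat.zero_le _) (Finset.mem_univ m)
      _ ≤ Nmax := hNmax l _ (hNmem t l ω)
  have hrowN : ∀ (t : ℕ) (l : Fin L) (ω : Ω) (m : Fin M), (∑ i, Npol t l ω m i) ≤ Nmax := by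
    intro t l ω m
    calc (∑ i, Npol t l ω m i) ≤ ∑ m', ∑ s, Npol t l ω m' s :=
          Finset.single_le_sum (f := fun m' => ∑ s, Npol t l ω m' s)
            (fun _ _ => Nat.zero_le _) (Finset.mem_univ m)
      _ ≤ Nmax := hNmax l _ (hNmem t l ω)
  have hnxtN : ∀ (t : ℕ) (l : Fin L) (ω : Ω) (m : Fin M) (i : Fin S),
      nxt (Npol t l ω m) i ≤ Nmax := by
    intro t l ω m i
    unfold nxt
    split
    · exact hentry t l ω m _
    · exact Nat.zero_le _
  have hmeas2 : ∀ (t : ℕ) (l : Fin L), Measurable (fun ω => (Npol (t - 1) l ω, Npol t l ω)) :=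
    fun t l => (hNmeas (t - 1) l).prodMk (hNmeas t l)
  have hmem2 : ∀ (t : ℕ) (l : Fin L) (ω : Ω),
      (Npol (t - 1) l ω, Npol t l ω) ∈ (𝒩 l) ×ˢ (𝒩 l) :=
    fun t l ω => Finset.mem_product.mpr ⟨hNmem (t - 1) l ω, hNmem t l ω⟩
  -- empirical probabilities
  set p : ℕ → Fin L → Config M S → ℝ :=
    fun t l N => ∫ ω, (if Npol t l ω = N then (1:ℝ) else 0) ∂μ with hpdef
  set pr : ℕ → Fin L → Config M S × Config M S → ℝ :=
    fun t l q => ∫ ω, (if (Npol (t - 1) l ω, Npol t l ω) = q then (1:ℝ) else 0) ∂μ with hprdef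
  have hp0 : ∀ t l N, 0 ≤ p t l N := fun t l N =>
    integral_nonneg fun ω => by dsimp only; split <;> norm_num
  have hp1 : ∀ t l N, p t l N ≤ 1 := by
    intro t l N
    have h := integral_mono (μ := μ) (aux_integrable_ind (hNmeas t l) N)
      (integrable_const 1) (fun ω => by dsimp only; split <;> norm_num)
    simpa using h
  have hpr0 : ∀ t l q, 0 ≤ pr t l q := fun t l q =>
    integral_nonneg fun ω => by dsimp only; split <;> norm_num
  have hpr1 : ∀ t l q, pr t l q ≤ 1 := by
    intro t l q
    have h := integral_mono (μ := μ) (aux_integrable_ind (hmeas2 t l) q)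
      (integrable_const 1) (fun ω => by dsimp only; split <;> norm_num)
    simpa using h
  have hpsum : ∀ t l, ∑ N ∈ 𝒩 l, p t l N = 1 := by
    intro t l
    have h1 : ∀ ω : Ω, (∑ N ∈ 𝒩 l, if Npol t l ω = N then (1:ℝ) else 0) = 1 := by
      intro ω; rw [Finset.sum_ite_eq, if_pos (hNmem t l ω)]
    calc ∑ N ∈ 𝒩 l, p t l N
        = ∫ ω, (∑ N ∈ 𝒩 l, if Npol t l ω = N then (1:ℝ) else 0) ∂μ :=
          (integral_finset_sum _ fun N _ => aux_integrable_ind (hNmeas t l) N).symm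
      _ = ∫ ω, (1:ℝ) ∂μ := integral_congr_ae (Filter.Eventually.of_forall h1)
      _ = 1 := by simp
  have hprrow : ∀ (t : ℕ) (l : Fin L) (n : Config M S),
      ∑ N' ∈ 𝒩 l, pr t l (n, N') = p (t - 1) l n := by
    intro t l n
    have h1 : ∀ ω : Ω,
        (∑ N' ∈ 𝒩 l, if (Npol (t - 1) l ω, Npol t l ω) = (n, N') then (1:ℝ) else 0)
        = (if Npol (t - 1) l ω = n then (1:ℝ) else 0) := by
      intro ω
      by_cases ha : Npol (t - 1) l ω = n
      · rw [if_pos ha]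
        have h2 : ∀ N' ∈ 𝒩 l,
            (if (Npol (t - 1) l ω, Npol t l ω) = (n, N') then (1:ℝ) else 0)
            = (if Npol t l ω = N' then (1:ℝ) else 0) := by
          intro N' _
          by_cases hb : Npol t l ω = N'
          · rw [if_pos hb, if_pos (by rw [ha, hb])]
          · rw [if_neg hb, if_neg fun h => hb (congrArg Prod.snd h)]
        rw [Finset.sum_congr rfl h2, Finset.sum_ite_eq, if_pos (hNmem t l ω)]
      · rw [if_neg ha]
        exact Finset.sum_eq_zero fun N' _ => if_neg fun h => ha (congrArg Prod.fst h)
    calc ∑ N' ∈ 𝒩 l, pr t l (n, N')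
        = ∫ ω, (∑ N' ∈ 𝒩 l,
            if (Npol (t - 1) l ω, Npol t l ω) = (n, N') then (1:ℝ) else 0) ∂μ :=
          (integral_finset_sum _ fun N' _ => aux_integrable_ind (hmeas2 t l) (n, N')).symm
      _ = p (t - 1) l n := integral_congr_ae (Filter.Eventually.of_forall h1)
  have hprcol : ∀ (t : ℕ) (l : Fin L) (N' : Config M S),
      ∑ n ∈ 𝒩 l, pr t l (n, N') = p t l N' := by
    intro t l N'
    have h1 : ∀ ω : Ω,
        (∑ n ∈ 𝒩 l, if (Npol (t - 1) l ω, Npol t l ω) = (n, N') then (1:ℝ) else 0)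
        = (if Npol t l ω = N' then (1:ℝ) else 0) := by
      intro ω
      by_cases hb : Npol t l ω = N'
      · rw [if_pos hb]
        have h2 : ∀ n ∈ 𝒩 l,
            (if (Npol (t - 1) l ω, Npol t l ω) = (n, N') then (1:ℝ) else 0)
            = (if Npol (t - 1) l ω = n then (1:ℝ) else 0) := by
          intro n _
          by_cases ha : Npol (t - 1) l ω = n
          · rw [if_pos ha, if_pos (by rw [ha, hb])]
          · rw [if_neg ha, if_neg fun h => ha (congrArg Prod.fst h)]
        rw [Finset.sum_congr rfl h2, Finset.sum_ite_eq, if_pos (hNmem (t - 1) l ω)]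
      · rw [if_neg hb]
        exact Finset.sum_eq_zero fun n _ => if_neg fun h => hb (congrArg Prod.snd h)
    calc ∑ n ∈ 𝒩 l, pr t l (n, N')
        = ∫ ω, (∑ n ∈ 𝒩 l,
            if (Npol (t - 1) l ω, Npol t l ω) = (n, N') then (1:ℝ) else 0) ∂μ :=
          (integral_finset_sum _ fun n _ => aux_integrable_ind (hmeas2 t l) (n, N')).symm
      _ = p t l N' := integral_congr_ae (Filter.Eventually.of_forall h1)
  -- time averages
  set pT : ℕ → Fin L → Config M S → ℝ :=
    fun T l N => (T : ℝ)⁻¹ * ∑ t ∈ Finset.Icc 1 T, p t l N with hpTdef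
  set RT : ℕ → Fin L → Config M S × Config M S → ℝ :=
    fun T l q => (T : ℝ)⁻¹ * ∑ t ∈ Finset.Icc 1 T, pr t l q with hRTdef
  have hIccCard : ∀ T : ℕ, ((Finset.Icc 1 T).card : ℝ) = T := by
    intro T; rw [Nat.card_Icc]; simp
  have havg01 : ∀ (T : ℕ) (g : ℕ → ℝ), (∀ t, 0 ≤ g t) → (∀ t, g t ≤ 1) →
      0 ≤ (T : ℝ)⁻¹ * ∑ t ∈ Finset.Icc 1 T, g t
        ∧ (T : ℝ)⁻¹ * ∑ t ∈ Finset.Icc 1 T, g t ≤ 1 := by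
    intro T g h0 h1
    constructor
    · exact mul_nonneg (by positivity) (Finset.sum_nonneg fun t _ => h0 t)
    · rcases Nat.eq_zero_or_pos T with hT | hT
      · subst hT; simp
      · have hTne : (T : ℝ) ≠ 0 := Nat.cast_ne_zero.mpr (by omega)
        have hsum : ∑ t ∈ Finset.Icc 1 T, g t ≤ (T : ℝ) := by
          calc ∑ t ∈ Finset.Icc 1 T, g t ≤ ∑ t ∈ Finset.Icc 1 T, (1:ℝ) :=
                Finset.sum_le_sum fun t _ => h1 t
            _ = (T : ℝ) := by rw [Finset.sum_const, nsmul_eq_mul, mul_one, hIccCard]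
        calc (T : ℝ)⁻¹ * ∑ t ∈ Finset.Icc 1 T, g t ≤ (T : ℝ)⁻¹ * T :=
              mul_le_mul_of_nonneg_left hsum (by positivity)
          _ = 1 := inv_mul_cancel₀ hTne
  -- Bolzano–Weierstrass on the empirical averages
  set θ : ℕ → ((Fin L × Config M S) ⊕ (Fin L × (Config M S × Config M S))) → ℝ :=
    fun T => Sum.elim (fun j => pT T j.1 j.2) (fun j => RT T j.1 j.2) with hθdef
  have hθmem : ∀ k, θ (ψ k) ∈
      Set.Icc (0 : ((Fin L × Config M S) ⊕ (Fin L × (Config M S × Config M S))) → ℝ) 1 := by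
    intro k
    rw [Set.mem_Icc]
    constructor
    · refine Pi.le_def.mpr fun j => ?_
      cases j with
      | inl j => exact (havg01 (ψ k) (fun t => p t j.1 j.2)
          (fun t => hp0 t j.1 j.2) (fun t => hp1 t j.1 j.2)).1
      | inr j => exact (havg01 (ψ k) (fun t => pr t j.1 j.2)
          (fun t => hpr0 t j.1 j.2) (fun t => hpr1 t j.1 j.2)).1
    · refine Pi.le_def.mpr fun j => ?_
      cases j with
      | inl j => exact (havg01 (ψ k) (fun t => p t j.1 j.2)
          (fun t => hp0 t j.1 j.2) (fun t => hp1 t j.1 j.2)).2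
      | inr j => exact (havg01 (ψ k) (fun t => pr t j.1 j.2)
          (fun t => hpr0 t j.1 j.2) (fun t => hpr1 t j.1 j.2)).2
  have hcomp : IsCompact
      (Set.Icc (0 : ((Fin L × Config M S) ⊕ (Fin L × (Config M S × Config M S))) → ℝ) 1) :=
    isCompact_Icc
  obtain ⟨a, ha, φ, hφmono, hφtend⟩ := hcomp.tendsto_subseq hθmem
  set σ : ℕ → ℕ := fun k => ψ (φ k) with hσdef
  have hσmono : StrictMono σ := hψmono.comp hφmono
  have hσtend : Filter.Tendsto σ Filter.atTop Filter.atTop := hσmono.tendsto_atTop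
  have hσge : ∀ k, k ≤ σ k := fun k => hσmono.le_apply
  have hcoord : ∀ j, Filter.Tendsto (fun k => θ (σ k) j) Filter.atTop (𝓝 (a j)) :=
    fun j => tendsto_pi_nhds.mp hφtend j
  set piInf : Fin L → Config M S → ℝ := fun l N => a (Sum.inl (l, N)) with hpiInfdef
  set RInf : Fin L → Config M S × Config M S → ℝ := fun l q => a (Sum.inr (l, q)) with hRInfdef
  have hconvp : ∀ l N, Filter.Tendsto (fun k => pT (σ k) l N) Filter.atTop (𝓝 (piInf l N)) :=
    fun l N => hcoord (Sum.inl (l, N))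
  have hconvR : ∀ l q, Filter.Tendsto (fun k => RT (σ k) l q) Filter.atTop (𝓝 (RInf l q)) :=
    fun l q => hcoord (Sum.inr (l, q))
  have hπ0 : ∀ l N, 0 ≤ piInf l N := fun l N => ha.1 (Sum.inl (l, N))
  have hR0 : ∀ l q, 0 ≤ RInf l q := fun l q => ha.1 (Sum.inr (l, q))
  have huniq : ∀ {f g : ℕ → ℝ} {x y : ℝ}, Filter.Tendsto f Filter.atTop (𝓝 x) →
      Filter.Tendsto g Filter.atTop (𝓝 y) → (∀ᶠ k in Filter.atTop, f k = g k) → x = y :=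
    fun {f g x y} hf hg hfg => tendsto_nhds_unique (hf.congr' hfg) hg
  have hev1 : ∀ᶠ k in Filter.atTop, 1 ≤ σ k :=
    Filter.eventually_atTop.mpr ⟨1, fun k hk => le_trans hk (hσge k)⟩
  -- limit identities
  have hπsum : ∀ l, ∑ N ∈ 𝒩 l, piInf l N = 1 := by
    intro l
    refine (huniq (tendsto_finset_sum _ fun N _ => hconvp l N) tendsto_const_nhds ?_)
    refine hev1.mono fun k hk => ?_
    have hTne : ((σ k : ℕ) : ℝ) ≠ 0 := Nat.cast_ne_zero.mpr (by omega)
    simp only [hpTdef]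
    calc ∑ N ∈ 𝒩 l, (σ k : ℝ)⁻¹ * ∑ t ∈ Finset.Icc 1 (σ k), p t l N
        = (σ k : ℝ)⁻¹ * ∑ N ∈ 𝒩 l, ∑ t ∈ Finset.Icc 1 (σ k), p t l N :=
          (Finset.mul_sum _ _ _).symm
      _ = (σ k : ℝ)⁻¹ * ∑ t ∈ Finset.Icc 1 (σ k), ∑ N ∈ 𝒩 l, p t l N := by
          rw [Finset.sum_comm]
      _ = (σ k : ℝ)⁻¹ * ∑ t ∈ Finset.Icc 1 (σ k), (1:ℝ) := by simp_rw [hpsum]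
      _ = 1 := by
          rw [Finset.sum_const, nsmul_eq_mul, mul_one, hIccCard, inv_mul_cancel₀ hTne]
  have hpT_zero : ∀ T l N, N ∉ 𝒩 l → pT T l N = 0 := by
    intro T l N hN
    have hp_zero : ∀ t, p t l N = 0 := by
      intro t
      have hz : ∀ ω : Ω, (if Npol t l ω = N then (1:ℝ) else 0) = 0 :=
        fun ω => if_neg fun (h : Npol t l ω = N) => hN (h ▸ hNmem t l ω)
      calc p t l N = ∫ _ω, (0:ℝ) ∂μ := integral_congr_ae (Filter.Eventually.of_forall hz)
        _ = 0 := integral_zero _ _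
    simp only [hpTdef]
    rw [Finset.sum_eq_zero fun t _ => hp_zero t, mul_zero]
  have hπzero : ∀ l N, N ∉ 𝒩 l → piInf l N = 0 := by
    intro l N hN
    exact huniq (hconvp l N) tendsto_const_nhds
      (Filter.Eventually.of_forall fun k => hpT_zero _ l N hN)
  have hcolInf : ∀ l N', ∑ n ∈ 𝒩 l, RInf l (n, N') = piInf l N' := by
    intro l N'
    refine huniq (tendsto_finset_sum _ fun n _ => hconvR l (n, N')) (hconvp l N')
      (Filter.Eventually.of_forall fun k => ?_)
    simp only [hRTdef, hpTdef]
    calc ∑ n ∈ 𝒩 l, (σ k : ℝ)⁻¹ * ∑ t ∈ Finset.Icc 1 (σ k), pr t l (n, N')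
        = (σ k : ℝ)⁻¹ * ∑ n ∈ 𝒩 l, ∑ t ∈ Finset.Icc 1 (σ k), pr t l (n, N') :=
          (Finset.mul_sum _ _ _).symm
      _ = (σ k : ℝ)⁻¹ * ∑ t ∈ Finset.Icc 1 (σ k), ∑ n ∈ 𝒩 l, pr t l (n, N') := by
          rw [Finset.sum_comm]
      _ = (σ k : ℝ)⁻¹ * ∑ t ∈ Finset.Icc 1 (σ k), p t l N' := by simp_rw [hprcol]
  have hshift : ∀ (T : ℕ), 1 ≤ T → ∀ (g : ℕ → ℝ),
      ∑ t ∈ Finset.Icc 1 T, g (t - 1) = (∑ t ∈ Finset.Icc 1 T, g t) + g 0 - g T := by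
    intro T hT g
    have e1 : ∑ t ∈ Finset.Icc 1 T, g (t - 1) = ∑ t ∈ Finset.range T, g t := by
      rw [← Finset.Ico_add_one_right_eq_Icc, Finset.sum_Ico_eq_sum_range]
      simp
    have e2 : ∑ t ∈ Finset.range T, g t = g 0 + ∑ t ∈ Finset.Ico 1 T, g t := by
      rw [Finset.range_eq_Ico]
      exact Finset.sum_eq_sum_Ico_succ_bot (by omega) g
    have e3 : ∑ t ∈ Finset.Icc 1 T, g t = (∑ t ∈ Finset.Ico 1 T, g t) + g T := by
      rw [← Finset.Ico_add_one_right_eq_Icc]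
      exact Finset.sum_Ico_succ_top (by omega) g
    rw [e1, e2, e3]; ring
  have hinvtend : Filter.Tendsto (fun k => ((σ k : ℕ) : ℝ)⁻¹) Filter.atTop (𝓝 0) :=
    (tendsto_natCast_atTop_atTop.comp hσtend).inv_tendsto_atTop
  have hrowInf : ∀ l n, ∑ N' ∈ 𝒩 l, RInf l (n, N') = piInf l n := by
    intro l n
    have hcor : Filter.Tendsto (fun k => (σ k : ℝ)⁻¹ * (p 0 l n - p (σ k) l n))
        Filter.atTop (𝓝 0) := by
      refine squeeze_zero_norm (fun k => ?_) hinvtend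
      have h1 : |p 0 l n - p (σ k) l n| ≤ 1 := abs_le.mpr
        ⟨by linarith [hp0 0 l n, hp1 0 l n, hp0 (σ k) l n, hp1 (σ k) l n],
         by linarith [hp0 0 l n, hp1 0 l n, hp0 (σ k) l n, hp1 (σ k) l n]⟩
      have h2 : ‖(σ k : ℝ)⁻¹ * (p 0 l n - p (σ k) l n)‖
          = (σ k : ℝ)⁻¹ * |p 0 l n - p (σ k) l n| := by
        rw [norm_mul, Real.norm_eq_abs, Real.norm_eq_abs, abs_of_nonneg (by positivity)]
      rw [h2]
      calc (σ k : ℝ)⁻¹ * |p 0 l n - p (σ k) l n| ≤ (σ k : ℝ)⁻¹ * 1 :=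
            mul_le_mul_of_nonneg_left h1 (by positivity)
        _ = (σ k : ℝ)⁻¹ := mul_one _
    have hmainT : Filter.Tendsto
        (fun k => pT (σ k) l n + (σ k : ℝ)⁻¹ * (p 0 l n - p (σ k) l n))
        Filter.atTop (𝓝 (piInf l n)) := by
      have h := (hconvp l n).add hcor
      simpa using h
    refine huniq (tendsto_finset_sum _ fun N' _ => hconvR l (n, N')) hmainT ?_
    refine hev1.mono fun k hk => ?_
    simp only [hRTdef, hpTdef]
    calc ∑ N' ∈ 𝒩 l, (σ k : ℝ)⁻¹ * ∑ t ∈ Finset.Icc 1 (σ k), pr t l (n, N')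
        = (σ k : ℝ)⁻¹ * ∑ t ∈ Finset.Icc 1 (σ k), ∑ N' ∈ 𝒩 l, pr t l (n, N') := by
          rw [← Finset.mul_sum, Finset.sum_comm]
      _ = (σ k : ℝ)⁻¹ * ∑ t ∈ Finset.Icc 1 (σ k), p (t - 1) l n := by simp_rw [hprrow]
      _ = (σ k : ℝ)⁻¹ * ((∑ t ∈ Finset.Icc 1 (σ k), p t l n) + p 0 l n - p (σ k) l n) := by
          rw [hshift (σ k) hk (fun t => p t l n)]
      _ = (σ k : ℝ)⁻¹ * ∑ t ∈ Finset.Icc 1 (σ k), p t l n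
          + (σ k : ℝ)⁻¹ * (p 0 l n - p (σ k) l n) := by ring
  -- cost identity
  have hI : ∀ t : ℕ, (∫ ω, (∑ l, (V * C1 c0 c (Npol t l ω)
        + U * (C2 (Npol (t - 1) l ω) (Npol t l ω) : ℝ))) ∂μ)
      = ∑ l, (V * ∑ N ∈ 𝒩 l, p t l N * C1 c0 c N
          + U * ∑ q ∈ (𝒩 l) ×ˢ (𝒩 l), pr t l q * (C2 q.1 q.2 : ℝ)) := by
    intro t
    have hint1 : ∀ l : Fin L, Integrable (fun ω => C1 c0 c (Npol t l ω)) μ :=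
      fun l => aux_integrable_comp (hNmeas t l) (hNmem t l) (C1 c0 c)
    have hint2 : ∀ l : Fin L,
        Integrable (fun ω => ((C2 (Npol (t - 1) l ω) (Npol t l ω) : ℕ) : ℝ)) μ :=
      fun l => aux_integrable_comp (hmeas2 t l) (hmem2 t l) (fun q => (C2 q.1 q.2 : ℝ))
    calc (∫ ω, (∑ l, (V * C1 c0 c (Npol t l ω)
            + U * (C2 (Npol (t - 1) l ω) (Npol t l ω) : ℝ))) ∂μ)
        = ∑ l, ∫ ω, (V * C1 c0 c (Npol t l ω)
            + U * (C2 (Npol (t - 1) l ω) (Npol t l ω) : ℝ)) ∂μ :=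
          integral_finset_sum _ fun l _ => ((hint1 l).const_mul V).add ((hint2 l).const_mul U)
      _ = ∑ l, (V * ∑ N ∈ 𝒩 l, p t l N * C1 c0 c N
            + U * ∑ q ∈ (𝒩 l) ×ˢ (𝒩 l), pr t l q * (C2 q.1 q.2 : ℝ)) := by
          refine Finset.sum_congr rfl fun l _ => ?_
          have e1 : ∫ ω, (V * C1 c0 c (Npol t l ω)
                + U * (C2 (Npol (t - 1) l ω) (Npol t l ω) : ℝ)) ∂μ
              = (∫ ω, V * C1 c0 c (Npol t l ω) ∂μ)
                + ∫ ω, U * (C2 (Npol (t - 1) l ω) (Npol t l ω) : ℝ) ∂μ :=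
            integral_add ((hint1 l).const_mul V) ((hint2 l).const_mul U)
          have e2 : ∫ ω, V * C1 c0 c (Npol t l ω) ∂μ
              = V * ∫ ω, C1 c0 c (Npol t l ω) ∂μ := integral_const_mul V _
          have e3 : ∫ ω, U * (C2 (Npol (t - 1) l ω) (Npol t l ω) : ℝ) ∂μ
              = U * ∫ ω, (C2 (Npol (t - 1) l ω) (Npol t l ω) : ℝ) ∂μ := integral_const_mul U _
          have e4 : (∫ ω, C1 c0 c (Npol t l ω) ∂μ) = ∑ N ∈ 𝒩 l, p t l N * C1 c0 c N :=
            aux_integral_comp (hNmeas t l) (hNmem t l) (C1 c0 c)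
          have e5 : (∫ ω, (C2 (Npol (t - 1) l ω) (Npol t l ω) : ℝ) ∂μ)
              = ∑ q ∈ (𝒩 l) ×ˢ (𝒩 l), pr t l q * (C2 q.1 q.2 : ℝ) :=
            aux_integral_comp (hmeas2 t l) (hmem2 t l) (fun q => (C2 q.1 q.2 : ℝ))
          rw [e1, e2, e3, e4, e5]
  have hF'G : ∀ T : ℕ, F' T = ∑ l, (V * ∑ N ∈ 𝒩 l, pT T l N * C1 c0 c N
      + U * ∑ q ∈ (𝒩 l) ×ˢ (𝒩 l), RT T l q * (C2 q.1 q.2 : ℝ)) := by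
    intro T
    simp only [hF'def]
    rw [show (∑ t ∈ Finset.Icc 1 T, ∫ ω, (∑ l, (V * C1 c0 c (Npol t l ω)
        + U * (C2 (Npol (t - 1) l ω) (Npol t l ω) : ℝ))) ∂μ)
      = ∑ t ∈ Finset.Icc 1 T, ∑ l, (V * ∑ N ∈ 𝒩 l, p t l N * C1 c0 c N
          + U * ∑ q ∈ (𝒩 l) ×ˢ (𝒩 l), pr t l q * (C2 q.1 q.2 : ℝ)) from
      Finset.sum_congr rfl fun t _ => hI t]
    rw [Finset.sum_comm, Finset.mul_sum]
    refine Finset.sum_congr rfl fun l _ => ?_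
    rw [Finset.sum_add_distrib, mul_add]
    simp only [hpTdef, hRTdef]
    congr 1
    · exact aux_avg_swap (Finset.Icc 1 T) (𝒩 l) (T:ℝ)⁻¹ V (fun t N => p t l N) (C1 c0 c)
    · exact aux_avg_swap (Finset.Icc 1 T) ((𝒩 l) ×ˢ (𝒩 l)) (T:ℝ)⁻¹ U
        (fun t q => pr t l q) (fun q => (C2 q.1 q.2 : ℝ))
  set x0 : ℝ := ∑ l, (V * ∑ N ∈ 𝒩 l, piInf l N * C1 c0 c N
      + U * ∑ q ∈ (𝒩 l) ×ˢ (𝒩 l), RInf l q * (C2 q.1 q.2 : ℝ)) with hx0def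
  have hFtends : Filter.Tendsto (fun k => F' (σ k)) Filter.atTop (𝓝 x0) := by
    have h2 : Filter.Tendsto (fun k => ∑ l, (V * ∑ N ∈ 𝒩 l, pT (σ k) l N * C1 c0 c N
        + U * ∑ q ∈ (𝒩 l) ×ˢ (𝒩 l), RT (σ k) l q * (C2 q.1 q.2 : ℝ)))
        Filter.atTop (𝓝 x0) := by
      rw [hx0def]
      refine tendsto_finset_sum _ fun l _ => Filter.Tendsto.add ?_ ?_
      · exact (tendsto_finset_sum _ fun N _ => (hconvp l N).mul_const (C1 c0 c N)).const_mul V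
      · exact (tendsto_finset_sum _ fun q _ =>
          (hconvR l q).mul_const ((C2 q.1 q.2 : ℕ) : ℝ)).const_mul U
    exact h2.congr fun k => (hF'G (σ k)).symm
  have hx0b : x0 ≤ b :=
    le_of_tendsto hFtends (Filter.Eventually.of_forall fun k => (hψlt (φ k)).le)
  -- integrability infrastructure for the workload argument
  have hcastmeas : Measurable (fun n : ℕ => (n : ℝ)) := measurable_from_top
  have hQev : ∀ (t : ℕ) (m : Fin M) (i : Fin S), Measurable (fun ω => (Q t ω m i : ℝ)) :=
    fun t m i => hcastmeas.comp
      ((measurable_pi_apply i).comp ((measurable_pi_apply m).comp (hQmeas t)))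
  have hQbd : ∀ (t : ℕ) (ω : Ω) (m : Fin M) (i : Fin S),
      Q t ω m i ≤ q0 m i + t * (Amax + L * Nmax) := by
    intro t
    induction t with
    | zero => intro ω m i; rw [hQ0 ω]; omega
    | succ t ih =>
      intro ω m i
      rw [hQrec t ω m i]
      have h1 : Q t ω m i - (∑ l, Npol t l ω m i) ≤ Q t ω m i := Nat.sub_le _ _
      have h2 : A t ω m i ≤ Amax := hAbdd t ω m i
      have h3 : min (∑ l, nxt (Npol t l ω m) i) (nxt (Q t ω m) i) ≤ L * Nmax := by
        refine le_trans (Nat.min_le_left _ _) ?_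
        calc ∑ l, nxt (Npol t l ω m) i ≤ ∑ _l : Fin L, Nmax :=
              Finset.sum_le_sum fun l _ => hnxtN t l ω m i
          _ = L * Nmax := by simp [Finset.sum_const, Finset.card_fin, smul_eq_mul]
      have h4 := ih ω m i
      have h5 : (t+1) * (Amax + L * Nmax) = t * (Amax + L * Nmax) + (Amax + L * Nmax) := by
        ring
      omega
  have hQint : ∀ (t : ℕ) (m : Fin M) (i : Fin S),
      Integrable (fun ω => (Q t ω m i : ℝ)) μ := by
    intro t m i
    refine aux_integrable_of_bounded (hQev t m i)
      ((q0 m i : ℝ) + t * (Amax + L * Nmax)) fun ω => ?_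
    rw [abs_of_nonneg (Nat.cast_nonneg _)]
    exact_mod_cast hQbd t ω m i
  have hAev : ∀ (t : ℕ) (m : Fin M) (i : Fin S), Measurable (fun ω => (A t ω m i : ℝ)) :=
    fun t m i => hcastmeas.comp
      ((measurable_pi_apply i).comp ((measurable_pi_apply m).comp (hAmeas t)))
  have hAint : ∀ (t : ℕ) (m : Fin M) (i : Fin S),
      Integrable (fun ω => (A t ω m i : ℝ)) μ := by
    intro t m i
    refine aux_integrable_of_bounded (hAev t m i) Amax fun ω => ?_
    rw [abs_of_nonneg (Nat.cast_nonneg _)]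
    exact_mod_cast hAbdd t ω m i
  obtain ⟨C, hC⟩ := hstable
  obtain ⟨T₀, hT₀⟩ := Filter.eventually_atTop.mp hC
  -- the key workload inequality
  have hkey : ∀ m : Fin M, (∑ s : Fin S, ((s:ℕ) + 1 : ℝ) * lam m s)
      ≤ ∑ l, ∑ N ∈ 𝒩 l, piInf l N * (∑ s, (N m s : ℝ)) := by
    intro m
    set Wm : ℝ := ∑ s : Fin S, ((s:ℕ) + 1 : ℝ) * lam m s with hWmdef
    have htel : ∀ (T : ℕ) (ω : Ω),
        (∑ i : Fin S, ((i:ℕ)+1) * Q T ω m i)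
          + (∑ t ∈ Finset.range T, ∑ i : Fin S, min (Q t ω m i) (∑ l, Npol t l ω m i))
        = (∑ i : Fin S, ((i:ℕ)+1) * q0 m i)
          + ∑ t ∈ Finset.range T, ∑ i : Fin S, ((i:ℕ)+1) * A t ω m i := by
      intro T ω
      induction T with
      | zero => simp [hQ0 ω]
      | succ T ih =>
        rw [Finset.sum_range_succ, Finset.sum_range_succ]
        have hstep : (∑ i : Fin S, ((i:ℕ)+1) * Q (T+1) ω m i)
              + ∑ i : Fin S, min (Q T ω m i) (∑ l, Npol T l ω m i)
            = (∑ i : Fin S, ((i:ℕ)+1) * Q T ω m i)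
              + ∑ i : Fin S, ((i:ℕ)+1) * A T ω m i :=
          aux_step (Q T ω m) (fun i => ∑ l, Npol T l ω m i) (A T ω m)
            (Q (T+1) ω m)
            (fun i => by
              rw [hQrec T ω m i, aux_nxt_sum Finset.univ (fun l => Npol T l ω m) i])
        omega
    have hminmeas : ∀ t : ℕ, Measurable
        (fun ω => ((∑ i : Fin S, min (Q t ω m i) (∑ l, Npol t l ω m i) : ℕ) : ℝ)) := by
      intro t
      refine hcastmeas.comp (Finset.measurable_sum _ fun i _ => Measurable.min ?_ ?_)
      · exact (measurable_pi_apply i).comp ((measurable_pi_apply m).comp (hQmeas t))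
      · exact Finset.measurable_sum _ fun l _ =>
          (measurable_pi_apply i).comp ((measurable_pi_apply m).comp (hNmeas t l))
    have hminbd : ∀ (t : ℕ) (ω : Ω),
        (∑ i : Fin S, min (Q t ω m i) (∑ l, Npol t l ω m i)) ≤ S * (L * Nmax) := by
      intro t ω
      calc ∑ i : Fin S, min (Q t ω m i) (∑ l, Npol t l ω m i)
          ≤ ∑ _i : Fin S, L * Nmax := by
            refine Finset.sum_le_sum fun i _ => le_trans (Nat.min_le_right _ _) ?_
            calc ∑ l, Npol t l ω m i ≤ ∑ _l : Fin L, Nmax :=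
                  Finset.sum_le_sum fun l _ => hentry t l ω m i
              _ = L * Nmax := by simp [Finset.sum_const, Finset.card_fin, smul_eq_mul]
        _ = S * (L * Nmax) := by simp [Finset.sum_const, Finset.card_fin, smul_eq_mul]
    have hminint : ∀ t : ℕ, Integrable
        (fun ω => ((∑ i : Fin S, min (Q t ω m i) (∑ l, Npol t l ω m i) : ℕ) : ℝ)) μ := by
      intro t
      refine aux_integrable_of_bounded (hminmeas t) ((S * (L * Nmax) : ℕ) : ℝ) fun ω => ?_
      rw [abs_of_nonneg (Nat.cast_nonneg _)]
      exact_mod_cast hminbd t ω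
    have hwqint : ∀ T : ℕ, Integrable
        (fun ω => ((∑ i : Fin S, ((i:ℕ)+1) * Q T ω m i : ℕ) : ℝ)) μ := by
      intro T
      have hmeasw : Measurable (fun ω => ((∑ i : Fin S, ((i:ℕ)+1) * Q T ω m i : ℕ) : ℝ)) :=
        hcastmeas.comp (Finset.measurable_sum _ fun i _ =>
          (measurable_from_top (f := fun n : ℕ => ((i:ℕ)+1) * n)).comp
            ((measurable_pi_apply i).comp ((measurable_pi_apply m).comp (hQmeas T))))
      refine aux_integrable_of_bounded hmeasw
        ((∑ i : Fin S, ((i:ℕ)+1) * (q0 m i + T * (Amax + L * Nmax)) : ℕ) : ℝ) fun ω => ?_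
      rw [abs_of_nonneg (Nat.cast_nonneg _)]
      have hb : (∑ i : Fin S, ((i:ℕ)+1) * Q T ω m i)
          ≤ ∑ i : Fin S, ((i:ℕ)+1) * (q0 m i + T * (Amax + L * Nmax)) :=
        Finset.sum_le_sum fun i _ => Nat.mul_le_mul_left _ (hQbd T ω m i)
      exact_mod_cast hb
    have haint : ∀ t : ℕ, Integrable
        (fun ω => ((∑ i : Fin S, ((i:ℕ)+1) * A t ω m i : ℕ) : ℝ)) μ := by
      intro t
      have hmeasa : Measurable (fun ω => ((∑ i : Fin S, ((i:ℕ)+1) * A t ω m i : ℕ) : ℝ)) :=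
        hcastmeas.comp (Finset.measurable_sum _ fun i _ =>
          (measurable_from_top (f := fun n : ℕ => ((i:ℕ)+1) * n)).comp
            ((measurable_pi_apply i).comp ((measurable_pi_apply m).comp (hAmeas t))))
      refine aux_integrable_of_bounded hmeasa
        ((∑ i : Fin S, ((i:ℕ)+1) * Amax : ℕ) : ℝ) fun ω => ?_
      rw [abs_of_nonneg (Nat.cast_nonneg _)]
      have hb : (∑ i : Fin S, ((i:ℕ)+1) * A t ω m i)
          ≤ ∑ i : Fin S, ((i:ℕ)+1) * Amax :=
        Finset.sum_le_sum fun i _ => Nat.mul_le_mul_left _ (hAbdd t ω m i)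
      exact_mod_cast hb
    have haval : ∀ t : ℕ,
        (∫ ω, ((∑ i : Fin S, ((i:ℕ)+1) * A t ω m i : ℕ) : ℝ) ∂μ) = Wm := by
      intro t
      have hfe : (fun ω => ((∑ i : Fin S, ((i:ℕ)+1) * A t ω m i : ℕ) : ℝ))
          = fun ω => ∑ i : Fin S, ((i:ℕ)+1 : ℝ) * (A t ω m i : ℝ) := by
        funext ω; push_cast; ring
      rw [hfe, integral_finset_sum _ fun i _ => (hAint t m i).const_mul _, hWmdef]
      exact Finset.sum_congr rfl fun i _ => by rw [integral_const_mul, hAmean t m i]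
    have hbal : ∀ T : ℕ,
        (∫ ω, ((∑ i : Fin S, ((i:ℕ)+1) * Q T ω m i : ℕ) : ℝ) ∂μ)
          + ∑ t ∈ Finset.range T,
              ∫ ω, ((∑ i : Fin S, min (Q t ω m i) (∑ l, Npol t l ω m i) : ℕ) : ℝ) ∂μ
        = ((∑ i : Fin S, ((i:ℕ)+1) * q0 m i : ℕ) : ℝ) + (T : ℝ) * Wm := by
      intro T
      have e1 : ∫ ω, (((∑ i : Fin S, ((i:ℕ)+1) * Q T ω m i : ℕ) : ℝ)
            + ∑ t ∈ Finset.range T,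
                ((∑ i : Fin S, min (Q t ω m i) (∑ l, Npol t l ω m i) : ℕ) : ℝ)) ∂μ
          = ∫ ω, (((∑ i : Fin S, ((i:ℕ)+1) * q0 m i : ℕ) : ℝ)
            + ∑ t ∈ Finset.range T, ((∑ i : Fin S, ((i:ℕ)+1) * A t ω m i : ℕ) : ℝ)) ∂μ := by
        refine integral_congr_ae (Filter.Eventually.of_forall fun ω => ?_)
        dsimp only
        exact_mod_cast htel T ω
      have e2 : ∫ ω, (((∑ i : Fin S, ((i:ℕ)+1) * Q T ω m i : ℕ) : ℝ)
            + ∑ t ∈ Finset.range T,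
                ((∑ i : Fin S, min (Q t ω m i) (∑ l, Npol t l ω m i) : ℕ) : ℝ)) ∂μ
          = (∫ ω, ((∑ i : Fin S, ((i:ℕ)+1) * Q T ω m i : ℕ) : ℝ) ∂μ)
            + ∑ t ∈ Finset.range T,
                ∫ ω, ((∑ i : Fin S, min (Q t ω m i) (∑ l, Npol t l ω m i) : ℕ) : ℝ) ∂μ := by
        rw [integral_add (hwqint T) (integrable_finset_sum _ fun t _ => hminint t),
          integral_finset_sum _ fun t _ => hminint t]
      have e3 : ∫ ω, (((∑ i : Fin S, ((i:ℕ)+1) * q0 m i : ℕ) : ℝ)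
            + ∑ t ∈ Finset.range T, ((∑ i : Fin S, ((i:ℕ)+1) * A t ω m i : ℕ) : ℝ)) ∂μ
          = ((∑ i : Fin S, ((i:ℕ)+1) * q0 m i : ℕ) : ℝ) + (T : ℝ) * Wm := by
        rw [integral_add (integrable_const _) (integrable_finset_sum _ fun t _ => haint t),
          integral_finset_sum _ fun t _ => haint t]
        simp only [integral_const, probReal_univ, ENNReal.toReal_one, smul_eq_mul, one_mul]
        congr 1
        rw [Finset.sum_congr rfl fun t _ => haval t, Finset.sum_const, Finset.card_range,
          nsmul_eq_mul]
      rw [← e2, e1, e3]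
    have hEwq : ∀ T, T₀ ≤ T →
        (∫ ω, ((∑ i : Fin S, ((i:ℕ)+1) * Q T ω m i : ℕ) : ℝ) ∂μ) ≤ (S : ℝ) * C := by
      intro T hT
      have hintS : Integrable (fun ω => (S : ℝ) * ∑ m', ∑ i, (Q T ω m' i : ℝ)) μ :=
        (integrable_finset_sum _ fun m' _ =>
          integrable_finset_sum _ fun i _ => hQint T m' i).const_mul _
      have h1 : (∫ ω, ((∑ i : Fin S, ((i:ℕ)+1) * Q T ω m i : ℕ) : ℝ) ∂μ)
          ≤ ∫ ω, (S : ℝ) * ∑ m', ∑ i, (Q T ω m' i : ℝ) ∂μ := by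
        refine integral_mono (hwqint T) hintS fun ω => ?_
        push_cast
        calc ∑ i : Fin S, ((i:ℕ)+1 : ℝ) * (Q T ω m i : ℝ)
            ≤ ∑ i : Fin S, (S : ℝ) * (Q T ω m i : ℝ) :=
              Finset.sum_le_sum fun i _ => mul_le_mul_of_nonneg_right
                (by exact_mod_cast Nat.succ_le_of_lt i.isLt) (Nat.cast_nonneg _)
          _ = (S : ℝ) * ∑ i, (Q T ω m i : ℝ) := (Finset.mul_sum _ _ _).symm
          _ ≤ (S : ℝ) * ∑ m', ∑ i, (Q T ω m' i : ℝ) := by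
              refine mul_le_mul_of_nonneg_left ?_ (Nat.cast_nonneg _)
              exact Finset.single_le_sum (f := fun m' => ∑ i, (Q T ω m' i : ℝ))
                (fun m' _ => Finset.sum_nonneg fun i _ => Nat.cast_nonneg _)
                (Finset.mem_univ m)
      have h2 : ∫ ω, (S : ℝ) * ∑ m', ∑ i, (Q T ω m' i : ℝ) ∂μ
          = (S : ℝ) * ∑ m', ∑ i, ∫ ω, (Q T ω m' i : ℝ) ∂μ := by
        rw [integral_const_mul]
        congr 1
        rw [integral_finset_sum _ fun m' _ => integrable_finset_sum _ fun i _ => hQint T m' i]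
        exact Finset.sum_congr rfl fun m' _ => integral_finset_sum _ fun i _ => hQint T m' i
      have h3 : (S : ℝ) * (∑ m', ∑ i, ∫ ω, (Q T ω m' i : ℝ) ∂μ) ≤ (S : ℝ) * C :=
        mul_le_mul_of_nonneg_left (hT₀ T hT) (Nat.cast_nonneg _)
      calc (∫ ω, ((∑ i : Fin S, ((i:ℕ)+1) * Q T ω m i : ℕ) : ℝ) ∂μ)
          ≤ ∫ ω, (S : ℝ) * ∑ m', ∑ i, (Q T ω m' i : ℝ) ∂μ := h1
        _ = (S : ℝ) * ∑ m', ∑ i, ∫ ω, (Q T ω m' i : ℝ) ∂μ := h2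
        _ ≤ (S : ℝ) * C := h3
    set servE : ℕ → ℝ := fun t => ∑ l, ∑ N ∈ 𝒩 l, p t l N * (∑ i, (N m i : ℝ)) with hservdef
    have hservint : ∀ t : ℕ, Integrable (fun ω => (∑ l, ∑ i, (Npol t l ω m i : ℝ))) μ :=
      fun t => integrable_finset_sum _ fun l _ =>
        aux_integrable_comp (hNmeas t l) (hNmem t l) (fun N => ∑ i, (N m i : ℝ))
    have hservE_eq : ∀ t, servE t = ∫ ω, (∑ l, ∑ i, (Npol t l ω m i : ℝ)) ∂μ := by
      intro t
      rw [integral_finset_sum _ fun l _ =>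
        aux_integrable_comp (hNmeas t l) (hNmem t l) (fun N => ∑ i, (N m i : ℝ))]
      exact Finset.sum_congr rfl fun l _ =>
        (aux_integral_comp (hNmeas t l) (hNmem t l) (fun N => ∑ i, (N m i : ℝ))).symm
    have hservnn : ∀ t, 0 ≤ servE t := fun t => Finset.sum_nonneg fun l _ =>
      Finset.sum_nonneg fun N _ => mul_nonneg (hp0 t l N)
        (Finset.sum_nonneg fun i _ => Nat.cast_nonneg _)
    have hservbd : ∀ t, servE t ≤ (L : ℝ) * Nmax := by
      intro t
      rw [hservE_eq t]
      have hpt : ∀ ω : Ω, (∑ l, ∑ i, (Npol t l ω m i : ℝ)) ≤ (L : ℝ) * Nmax := by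
        intro ω
        calc ∑ l, ∑ i, (Npol t l ω m i : ℝ) ≤ ∑ _l : Fin L, (Nmax : ℝ) :=
              Finset.sum_le_sum fun l _ => by exact_mod_cast hrowN t l ω m
          _ = (L : ℝ) * Nmax := by
              simp [Finset.sum_const, Finset.card_fin, nsmul_eq_mul]
      calc ∫ ω, (∑ l, ∑ i, (Npol t l ω m i : ℝ)) ∂μ ≤ ∫ _ω, (L : ℝ) * Nmax ∂μ :=
            integral_mono (hservint t) (integrable_const _) hpt
        _ = (L : ℝ) * Nmax := by simp
    have hms_le : ∀ t,
        (∫ ω, ((∑ i : Fin S, min (Q t ω m i) (∑ l, Npol t l ω m i) : ℕ) : ℝ) ∂μ)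
          ≤ servE t := by
      intro t
      rw [hservE_eq t]
      refine integral_mono (hminint t) (hservint t) fun ω => ?_
      have h1 : (∑ i : Fin S, min (Q t ω m i) (∑ l, Npol t l ω m i))
          ≤ ∑ l, ∑ i, Npol t l ω m i := by
        calc ∑ i : Fin S, min (Q t ω m i) (∑ l, Npol t l ω m i)
            ≤ ∑ i : Fin S, ∑ l, Npol t l ω m i :=
              Finset.sum_le_sum fun i _ => Nat.min_le_right _ _
          _ = ∑ l, ∑ i, Npol t l ω m i := Finset.sum_comm
      have h1' := (Nat.cast_le (α := ℝ)).mpr h1; rw [Nat.cast_sum] at h1'; simp only [Nat.cast_sum] at h1' ⊢; exact h1'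
    have hmain : ∀ T : ℕ, T₀ ≤ T → 1 ≤ T →
        Wm ≤ (T:ℝ)⁻¹ * ((S:ℝ) * C + (L:ℝ) * Nmax)
          + ∑ l, ∑ N ∈ 𝒩 l, pT T l N * (∑ i, (N m i : ℝ)) := by
      intro T hT0 hT1
      have h1 : (T:ℝ) * Wm ≤ (S:ℝ) * C + ∑ t ∈ Finset.range T, servE t := by
        have hb := hbal T
        have h2 := hEwq T hT0
        have h3 : ∑ t ∈ Finset.range T,
            (∫ ω, ((∑ i : Fin S, min (Q t ω m i) (∑ l, Npol t l ω m i) : ℕ) : ℝ) ∂μ)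
            ≤ ∑ t ∈ Finset.range T, servE t := Finset.sum_le_sum fun t _ => hms_le t
        have h4 : (0:ℝ) ≤ ((∑ i : Fin S, ((i:ℕ)+1) * q0 m i : ℕ) : ℝ) := Nat.cast_nonneg _
        linarith
      have h5 : ∑ t ∈ Finset.range T, servE t
          ≤ (L:ℝ) * Nmax + ∑ t ∈ Finset.Icc 1 T, servE t := by
        have e2 : ∑ t ∈ Finset.range (T+1), servE t
            = servE 0 + ∑ t ∈ Finset.Icc 1 T, servE t := by
          rw [Finset.range_eq_Ico, Finset.sum_eq_sum_Ico_succ_bot (by omega) servE,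
            ← Finset.Ico_add_one_right_eq_Icc]
        have e1 : ∑ t ∈ Finset.range T, servE t ≤ ∑ t ∈ Finset.range (T+1), servE t := by
          rw [Finset.sum_range_succ]
          linarith [hservnn T]
        have e3 := hservbd 0
        linarith [e2.le, e2.ge]
      have h6 : (T:ℝ) * Wm ≤ (S:ℝ) * C + (L:ℝ) * Nmax + ∑ t ∈ Finset.Icc 1 T, servE t := by
        linarith
      have hTpos : (0:ℝ) < T := by exact_mod_cast hT1
      have h7 : Wm = (T:ℝ)⁻¹ * ((T:ℝ) * Wm) := by field_simp
      rw [h7]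
      calc (T:ℝ)⁻¹ * ((T:ℝ) * Wm)
          ≤ (T:ℝ)⁻¹ * ((S:ℝ) * C + (L:ℝ)*Nmax + ∑ t ∈ Finset.Icc 1 T, servE t) :=
            mul_le_mul_of_nonneg_left h6 (by positivity)
        _ = (T:ℝ)⁻¹ * ((S:ℝ) * C + (L:ℝ)*Nmax)
            + (T:ℝ)⁻¹ * ∑ t ∈ Finset.Icc 1 T, servE t := by ring
        _ = (T:ℝ)⁻¹ * ((S:ℝ) * C + (L:ℝ)*Nmax)
            + ∑ l, ∑ N ∈ 𝒩 l, pT T l N * (∑ i, (N m i : ℝ)) := by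
            congr 1
            simp only [hservdef, hpTdef]
            calc (T:ℝ)⁻¹ * ∑ t ∈ Finset.Icc 1 T, ∑ l, ∑ N ∈ 𝒩 l, p t l N * (∑ i, (N m i : ℝ))
                = (T:ℝ)⁻¹ * ∑ l, ∑ t ∈ Finset.Icc 1 T, ∑ N ∈ 𝒩 l, p t l N * (∑ i, (N m i : ℝ)) := by
                  rw [Finset.sum_comm]
              _ = ∑ l, (T:ℝ)⁻¹ * ∑ t ∈ Finset.Icc 1 T, ∑ N ∈ 𝒩 l, p t l N * (∑ i, (N m i : ℝ)) :=
                  Finset.mul_sum _ _ _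
              _ = ∑ l, ∑ N ∈ 𝒩 l, ((T:ℝ)⁻¹ * ∑ t ∈ Finset.Icc 1 T, p t l N) * (∑ i, (N m i : ℝ)) :=
                  Finset.sum_congr rfl fun l _ => aux_avg_swap' _ _ _ _ _
    have htendRHS : Filter.Tendsto (fun k => (σ k : ℝ)⁻¹ * ((S:ℝ) * C + (L:ℝ) * Nmax)
        + ∑ l, ∑ N ∈ 𝒩 l, pT (σ k) l N * (∑ i, (N m i : ℝ))) Filter.atTop
        (𝓝 (0 + ∑ l, ∑ N ∈ 𝒩 l, piInf l N * (∑ i, (N m i : ℝ)))) := by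
      refine Filter.Tendsto.add ?_ ?_
      · have h := hinvtend.mul_const ((S:ℝ) * C + (L:ℝ) * Nmax)
        simpa using h
      · exact tendsto_finset_sum _ fun l _ =>
          tendsto_finset_sum _ fun N _ => (hconvp l N).mul_const _
    have hev : ∀ᶠ k in Filter.atTop, Wm ≤ (σ k : ℝ)⁻¹ * ((S:ℝ) * C + (L:ℝ) * Nmax)
        + ∑ l, ∑ N ∈ 𝒩 l, pT (σ k) l N * (∑ i, (N m i : ℝ)) := by
      refine Filter.eventually_atTop.mpr ⟨max T₀ 1, fun k hk => ?_⟩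
      exact hmain (σ k) (le_trans (le_trans (le_max_left _ _) hk) (hσge k))
        (le_trans (le_trans (le_max_right _ _) hk) (hσge k))
    have hfin := ge_of_tendsto htendRHS hev
    rw [zero_add] at hfin
    exact hfin
  -- construction of the feasible point
  set wI : Fin L → Fin M → ℝ := fun l m => ∑ N ∈ 𝒩 l, piInf l N * (∑ i, (N m i : ℝ))
    with hwIdef
  have hwInn : ∀ l m, 0 ≤ wI l m := fun l m => Finset.sum_nonneg fun N _ =>
    mul_nonneg (hπ0 l N) (Finset.sum_nonneg fun i _ => Nat.cast_nonneg _)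
  set den : Fin M → ℝ := fun m => ∑ l, wI l m with hdendef
  have hdennn : ∀ m, 0 ≤ den m := fun m => Finset.sum_nonneg fun l _ => hwInn l m
  set lamL : Fin L → Fin M → Fin S → ℝ :=
    fun l m s => if den m = 0 then lam m s / L else (wI l m / den m) * lam m s with hlamLdef
  have hlamnn := hlam.1
  have hLpos : (0:ℝ) < L := by exact_mod_cast hL
  have hlamL_nn : ∀ l m s, 0 ≤ lamL l m s := by
    intro l m s
    simp only [hlamLdef]
    split
    · exact div_nonneg (hlamnn m s) hLpos.le
    · exact mul_nonneg (div_nonneg (hwInn l m) (hdennn m)) (hlamnn m s)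
  have hlamL_sum : ∀ m s, ∑ l, lamL l m s = lam m s := by
    intro m s
    simp only [hlamLdef]
    split
    · rw [Finset.sum_const, Finset.card_fin, nsmul_eq_mul]
      field_simp
    · rename_i hden
      rw [← Finset.sum_mul, ← Finset.sum_div]
      have hd : (∑ l, wI l m) = den m := (hdendef ▸ rfl)
      rw [hd, div_mul_eq_mul_div, mul_comm, mul_div_assoc, div_self hden, mul_one]
  have hkey' : ∀ m, (∑ s : Fin S, ((s:ℕ) + 1 : ℝ) * lam m s) ≤ den m := fun m => hkey m
  have hlamL_work : ∀ l m, ∑ s : Fin S, ((s:ℕ) + 1 : ℝ) * lamL l m s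
      ≤ ∑ N ∈ 𝒩 l, piInf l N * ∑ s, (N m s : ℝ) := by
    intro l m
    have hgoal : ∑ s : Fin S, ((s:ℕ) + 1 : ℝ) * lamL l m s ≤ wI l m := by
      simp only [hlamLdef]
      by_cases hden : den m = 0
      · simp only [if_pos hden]
        have hle : wI l m ≤ den m := Finset.single_le_sum (f := fun l' => wI l' m)
          (fun l' _ => hwInn l' m) (Finset.mem_univ l)
        have hWm0 : (∑ s : Fin S, ((s:ℕ) + 1 : ℝ) * lam m s) = 0 := by
          have h1 : (∑ s : Fin S, ((s:ℕ) + 1 : ℝ) * lam m s) ≤ 0 := hden ▸ hkey' m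
          have h2 : 0 ≤ ∑ s : Fin S, ((s:ℕ) + 1 : ℝ) * lam m s :=
            Finset.sum_nonneg fun s _ => mul_nonneg (by positivity) (hlamnn m s)
          linarith
        calc ∑ s : Fin S, ((s:ℕ) + 1 : ℝ) * (lam m s / (L:ℝ))
            = (∑ s : Fin S, ((s:ℕ) + 1 : ℝ) * lam m s) / (L:ℝ) := by
              rw [Finset.sum_div]
              exact Finset.sum_congr rfl fun s _ => by ring
          _ = 0 := by rw [hWm0, zero_div]
          _ ≤ wI l m := hwInn l m
      · simp only [if_neg hden]
        have hdenpos : 0 < den m := lt_of_le_of_ne (hdennn m) (Ne.symm hden)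
        calc ∑ s : Fin S, ((s:ℕ) + 1 : ℝ) * ((wI l m / den m) * lam m s)
            = (wI l m / den m) * ∑ s : Fin S, ((s:ℕ) + 1 : ℝ) * lam m s := by
              rw [Finset.mul_sum]
              exact Finset.sum_congr rfl fun s _ => by ring
          _ ≤ (wI l m / den m) * den m :=
              mul_le_mul_of_nonneg_left (hkey' m) (div_nonneg (hwInn l m) (hdennn m))
          _ = wI l m := by field_simp
    exact hgoal
  -- the transition matrix
  set P : Fin L → Config M S → Config M S → ℝ := fun l n N' =>
    if 0 < piInf l n then RInf l (n, N') / piInf l n else (if N' = 0 then 1 else 0)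
    with hPdef
  have hPnn : ∀ l n N', 0 ≤ P l n N' := by
    intro l n N'
    simp only [hPdef]
    split
    · exact div_nonneg (hR0 l (n, N')) (le_of_lt (by assumption))
    · split <;> norm_num
  have hRzero : ∀ l n N', n ∈ 𝒩 l → N' ∈ 𝒩 l → piInf l n = 0 → RInf l (n, N') = 0 := by
    intro l n N' hn hN' hz
    have hsum : ∑ N'' ∈ 𝒩 l, RInf l (n, N'') = 0 := by rw [hrowInf l n, hz]
    exact (Finset.sum_eq_zero_iff_of_nonneg fun N'' _ => hR0 l (n, N'')).mp hsum N' hN'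
  have hProw : ∀ l, ∀ n ∈ 𝒩 l, ∑ N' ∈ 𝒩 l, P l n N' = 1 := by
    intro l n hn
    simp only [hPdef]
    by_cases hpos : 0 < piInf l n
    · simp only [if_pos hpos]
      rw [← Finset.sum_div, hrowInf l n, div_self (ne_of_gt hpos)]
    · simp only [if_neg hpos]
      rw [Finset.sum_ite_eq' (𝒩 l) (0 : Config M S) (fun _ => (1:ℝ)), if_pos (h0mem l)]
  have hPstat : ∀ l, ∀ N ∈ 𝒩 l, ∑ N' ∈ 𝒩 l, piInf l N' * P l N' N = piInf l N := by
    intro l N hN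
    have h1 : ∀ N' ∈ 𝒩 l, piInf l N' * P l N' N = RInf l (N', N) := by
      intro N' hN'
      simp only [hPdef]
      by_cases hpos : 0 < piInf l N'
      · rw [if_pos hpos]
        field_simp
      · rw [if_neg hpos]
        have hz : piInf l N' = 0 := le_antisymm (not_lt.mp hpos) (hπ0 l N')
        rw [hz, zero_mul]
        exact (hRzero l N' N hN' hN hz).symm
    rw [Finset.sum_congr rfl h1, hcolInf l N]
  set x : ℝ := ∑ l, (V * ∑ N ∈ 𝒩 l, piInf l N * C1 c0 c N
      + U * ∑ N ∈ 𝒩 l, piInf l N * ∑ N' ∈ 𝒩 l, P l N N' * (C2 N N' : ℝ)) with hxdef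
  have hxx0 : x = x0 := by
    rw [hxdef, hx0def]
    refine Finset.sum_congr rfl fun l _ => ?_
    congr 1
    congr 1
    rw [Finset.sum_product]
    refine Finset.sum_congr rfl fun N hN => ?_
    by_cases hpos : 0 < piInf l N
    · rw [Finset.mul_sum]
      refine Finset.sum_congr rfl fun N' hN' => ?_
      simp only [hPdef, if_pos hpos]
      field_simp
    · have hz : piInf l N = 0 := le_antisymm (not_lt.mp hpos) (hπ0 l N)
      rw [hz, zero_mul]
      exact (Finset.sum_eq_zero fun N' hN' => by
        rw [hRzero l N N' hN hN' hz, zero_mul]).symm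
  have hmemx : x ∈ CoptSet 𝒩 c0 c V U lam :=
    ⟨lamL, piInf, P, hlamL_nn, hlamL_sum, hπ0, hπzero, hπsum, hPnn, hProw, hPstat,
      hlamL_work, hxdef⟩
  have hbddB : BddBelow (CoptSet 𝒩 c0 c V U lam) := by
    refine ⟨0, fun y hy => ?_⟩
    obtain ⟨lamL', π', P', h1, h2, h3, h4, h5, h6, h7, h8, h9, h10⟩ := hy
    rw [h10]
    refine Finset.sum_nonneg fun l _ => add_nonneg (mul_nonneg hV ?_) (mul_nonneg hU ?_)
    · exact Finset.sum_nonneg fun N _ => mul_nonneg (h3 l N) (hC1nn N)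
    · exact Finset.sum_nonneg fun N _ => mul_nonneg (h3 l N)
        (Finset.sum_nonneg fun N' _ => mul_nonneg (h6 l N N') (Nat.cast_nonneg _))
  have hCle : Copt 𝒩 c0 c V U lam ≤ x := csInf_le hbddB hmemx
  rw [hxx0] at hCle
  exact absurd hbC (not_lt.mpr (le_trans hCle hx0b))
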